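/- Let (a_n) be a sequence of positive reals and C > 0 a constant such that for every n ≥ 2 one has a_n ≤ C · Σ_{n₁+n₂=n, n₁,n₂≥1} a_{n₁} a_{n₂}. Then for every n ≥ 1, a_n ≤ ((2/3)·π²·C)^{n-1} · a₁^n. -/
import Mathlib


open Finset Real

private lemma sum_inv_sq_le (n : ℕ) : ∑ k ∈ Finset.Ioo 0 n, (1:ℝ)/(k:ℝ)^2 ≤ π^2/6 :=
  sum_le_hasSum _ (fun i _ => by positivity) hasSum_zeta_two

private lemma sum_symm (n : ℕ) :
    ∑ k ∈ Finset.Ioo 0 n, (1:ℝ)/((n-k:ℕ):ℝ)^2 = ∑ k ∈ Finset.Ioo 0 n, (1:ℝ)/(k:ℝ)^2 := by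
  refine Finset.sum_nbij' (fun k => n - k) (fun k => n - k) ?_ ?_ ?_ ?_ ?_ <;>
    simp only [Finset.mem_Ioo] <;> intros <;> first | omega | trivial

private lemma key_sum (n : ℕ) (hn : 2 ≤ n) :
    ∑ k ∈ Finset.Ioo 0 n, (1:ℝ)/((k:ℝ)^2 * ((n-k:ℕ):ℝ)^2) ≤ (2/3)*π^2/(n:ℝ)^2 := by
  have hn0 : (0:ℝ) < n := by positivity
  have hterm : ∀ k ∈ Finset.Ioo 0 n, (1:ℝ)/((k:ℝ)^2 * ((n-k:ℕ):ℝ)^2)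
      ≤ 2/(n:ℝ)^2 * (1/(k:ℝ)^2 + 1/((n-k:ℕ):ℝ)^2) := by
    intro k hk
    simp only [Finset.mem_Ioo] at hk
    have hx : (0:ℝ) < k := by exact_mod_cast hk.1
    have hy : (0:ℝ) < ((n-k:ℕ):ℝ) := by
      have : 0 < n - k := by omega
      exact_mod_cast this
    have hxy : (k:ℝ) + ((n-k:ℕ):ℝ) = n := by
      have : k + (n - k) = n := by omega
      exact_mod_cast this
    set x := (k:ℝ)
    set y := ((n-k:ℕ):ℝ)
    have hn2 : ((n:ℝ))^2 * (x^2*y^2) = (x + y)^2 * (x^2*y^2) := by rw [hxy]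
    rw [div_add_div _ _ (by positivity) (by positivity), div_mul_div_comm,
      div_le_div_iff₀ (by positivity) (by positivity)]
    nlinarith [hn2, mul_nonneg (sq_nonneg (x - y)) (by positivity : (0:ℝ) ≤ x^2*y^2)]
  calc ∑ k ∈ Finset.Ioo 0 n, (1:ℝ)/((k:ℝ)^2 * ((n-k:ℕ):ℝ)^2)
      ≤ ∑ k ∈ Finset.Ioo 0 n, 2/(n:ℝ)^2 * (1/(k:ℝ)^2 + 1/((n-k:ℕ):ℝ)^2) :=
        Finset.sum_le_sum hterm
    _ = 2/(n:ℝ)^2 * (∑ k ∈ Finset.Ioo 0 n, (1:ℝ)/(k:ℝ)^2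
          + ∑ k ∈ Finset.Ioo 0 n, (1:ℝ)/((n-k:ℕ):ℝ)^2) := by
        rw [← Finset.mul_sum, Finset.sum_add_distrib]
    _ ≤ 2/(n:ℝ)^2 * (π^2/6 + π^2/6) := by
        have h1 := sum_inv_sq_le n
        have h2 : ∑ k ∈ Finset.Ioo 0 n, (1:ℝ)/((n-k:ℕ):ℝ)^2 ≤ π^2/6 := by
          rw [sum_symm]; exact h1
        have : (0:ℝ) ≤ 2/(n:ℝ)^2 := by positivity
        nlinarith
    _ = (2/3)*π^2/(n:ℝ)^2 := by ring

/-- Catalan-type recursion bound: if a positive sequence satisfies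
`a n ≤ C * ∑_{n₁+n₂=n, n₁,n₂ ≥ 1} a n₁ * a n₂` for all `n ≥ 2`, then
`a n ≤ ((2/3) π² C)^(n-1) * (a 1)^n` for all `n ≥ 1`. -/
theorem stmt_0 (a : ℕ → ℝ) (C : ℝ) (hC : 0 < C) (hpos : ∀ n, 1 ≤ n → 0 < a n)
    (hrec : ∀ n, 2 ≤ n → a n ≤ C * ∑ k ∈ Finset.Ioo 0 n, a k * a (n - k)) :
    ∀ n, 1 ≤ n → a n ≤ ((2 / 3) * Real.pi ^ 2 * C) ^ (n - 1) * (a 1) ^ n := by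
  have hpi := Real.pi_pos
  set K := (2/3) * Real.pi^2 * C with hK
  have hKpos : 0 < K := by positivity
  have a1pos : 0 < a 1 := hpos 1 le_rfl
  have main : ∀ n, 1 ≤ n → a n ≤ K^(n-1) * (a 1)^n / (n:ℝ)^2 := by
    intro n
    induction n using Nat.strong_induction_on with
    | _ n ih =>
      intro hn
      rcases eq_or_lt_of_le hn with h1 | h2
      · rw [← h1]; norm_num
      · have hn2 : 2 ≤ n := h2
        have hn0 : (0:ℝ) < n := by positivity
        calc a n ≤ C * ∑ k ∈ Finset.Ioo 0 n, a k * a (n-k) := hrec n hn2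
          _ ≤ C * ∑ k ∈ Finset.Ioo 0 n,
              (K^(k-1)*(a 1)^k/(k:ℝ)^2) * (K^(n-k-1)*(a 1)^(n-k)/((n-k:ℕ):ℝ)^2) := by
            apply mul_le_mul_of_nonneg_left _ hC.le
            apply Finset.sum_le_sum
            intro k hk
            simp only [Finset.mem_Ioo] at hk
            have hk1 : 1 ≤ k := hk.1
            have hk2 : 1 ≤ n - k := by omega
            have b1 := ih k (by omega) hk1
            have b2 := ih (n-k) (by omega) hk2
            exact mul_le_mul b1 b2 (hpos _ hk2).le (by positivity)
          _ = C * (K^(n-2) * (a 1)^n) * ∑ k ∈ Finset.Ioo 0 n,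
                (1:ℝ)/((k:ℝ)^2 * ((n-k:ℕ):ℝ)^2) := by
            rw [mul_assoc]
            congr 1
            rw [Finset.mul_sum]
            apply Finset.sum_congr rfl
            intro k hk
            simp only [Finset.mem_Ioo] at hk
            rw [div_mul_div_comm, mul_mul_mul_comm, ← pow_add, ← pow_add,
              show k - 1 + (n - k - 1) = n - 2 by omega,
              show k + (n - k) = n by omega]
            ring
          _ ≤ C * (K^(n-2) * (a 1)^n) * ((2/3)*π^2/(n:ℝ)^2) := by
            apply mul_le_mul_of_nonneg_left (key_sum n hn2) (by positivity)
          _ = K^(n-1) * (a 1)^n / (n:ℝ)^2 := by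
            rw [show n - 1 = (n-2) + 1 by omega, pow_succ, hK]
            ring
  intro n hn
  calc a n ≤ K^(n-1) * (a 1)^n / (n:ℝ)^2 := main n hn
    _ ≤ K^(n-1) * (a 1)^n := by
      apply div_le_self (by positivity)
      have : (1:ℝ) ≤ (n:ℝ) := by exact_mod_cast hn
      nlinarith
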